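/- arXiv:1601.01836 — 6 statements merged into one kernel-verified Lean document; each statement's English description precedes it below -/
import Mathlib

section
/- Let J be a group with invariant length function ℓ_J and X a finite group, and let W = J ≀ X be the restricted standard wreath product with base group B = functions X → J. Define ℓ_J^X(b) = max_{x ∈ X} ℓ_J(b(x)) for b ∈ B, and ℓ_J^X(xb) = 1 for x ≠ 1 in X. Then ℓ_J^X is an invariant length function on W. -/
/-- An invariant length function on a group, valued in `[0,1]`. -/
def IsInvLength {K : Type*} [Group K] (ℓ : K → ℝ) : Prop :=
  (∀ x, 0 ≤ ℓ x) ∧ (∀ x, ℓ x ≤ 1) ∧ (∀ x, ℓ x = 0 ↔ x = 1) ∧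
  (∀ x, ℓ x⁻¹ = ℓ x) ∧ (∀ x y, ℓ (x * y) ≤ ℓ x + ℓ y) ∧
  (∀ x y, ℓ (x * y * x⁻¹) = ℓ y)

/-- The action of `X` on the base group `X → J` of the wreath product `J ≀ X`,
given by `(x • b) y = b (y * x)` (i.e. `b^x (y) = b (y x⁻¹)` rewritten as a left action). -/
def wrAct (J X : Type*) [Group J] [Group X] : X →* MulAut (X → J) where
  toFun x :=
    { toFun := fun b y => b (y * x)
      invFun := fun b y => b (y * x⁻¹)
      left_inv := fun b => by funext y; simp [mul_assoc]
      right_inv := fun b => by funext y; simp [mul_assoc]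
      map_mul' := fun b c => rfl }
  map_one' := by ext b y; simp
  map_mul' := fun x₁ x₂ => by ext b y; simp [mul_assoc]

/-- The restricted standard wreath product `J ≀ X` (with `X` finite, so the
restriction condition is vacuous). -/
abbrev Wr (J X : Type*) [Group J] [Group X] := (X → J) ⋊[wrAct J X] X

/-- The length function `ℓ_J^X` on `J ≀ X`. -/
noncomputable def wrLen {J X : Type*} [Group J] [Group X] [Fintype X] [DecidableEq X]
    (ℓJ : J → ℝ) (w : Wr J X) : ℝ :=
  if w.right = 1 then
    Finset.univ.sup' ⟨1, Finset.mem_univ 1⟩ (fun x => ℓJ (w.left x))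
  else 1

lemma wrAct_apply {J X : Type*} [Group J] [Group X] (g : X) (b : X → J) (y : X) :
    wrAct J X g b y = b (y * g) := rfl

theorem stmt_6 {J X : Type*} [Group J] [Group X] [Fintype X] [DecidableEq X]
    (ℓJ : J → ℝ) (hJ : IsInvLength ℓJ) :
    IsInvLength (wrLen (X := X) ℓJ) := by
  obtain ⟨h0, h1, he, hi, hs, hc⟩ := hJ
  have key : ∀ (f : X → ℝ) (s : X),
      Finset.univ.sup' ⟨1, Finset.mem_univ 1⟩ (fun z => f (z * s)) =
      Finset.univ.sup' ⟨1, Finset.mem_univ 1⟩ f := by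
    intro f s
    apply le_antisymm
    · exact Finset.sup'_le _ _ fun z _ => Finset.le_sup' f (Finset.mem_univ (z * s))
    · refine Finset.sup'_le _ _ fun z _ => ?_
      have := Finset.le_sup' (fun z => f (z * s)) (Finset.mem_univ (z * s⁻¹))
      simpa using this
  have nonneg : ∀ w : Wr J X, 0 ≤ wrLen ℓJ w := by
    intro w
    unfold wrLen
    split
    · exact le_trans (h0 _) (Finset.le_sup' (fun x => ℓJ (w.left x)) (Finset.mem_univ 1))
    · norm_num
  have le1 : ∀ w : Wr J X, wrLen ℓJ w ≤ 1 := by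
    intro w
    unfold wrLen
    split
    · exact Finset.sup'_le _ _ fun x _ => h1 _
    · exact le_refl 1
  refine ⟨nonneg, le1, ?_, ?_, ?_, ?_⟩
  · intro w
    unfold wrLen
    split
    case isTrue hw =>
      constructor
      · intro h
        have hz : ∀ x : X, ℓJ (w.left x) = 0 := fun x =>
          le_antisymm (h ▸ Finset.le_sup' (fun x => ℓJ (w.left x)) (Finset.mem_univ x)) (h0 _)
        have hl : w.left = 1 := funext fun x => (he _).1 (hz x)
        cases w with
        | mk l r => cases hl; cases hw; rfl
      · intro h
        subst h
        have : (fun x : X => ℓJ ((1 : Wr J X).left x)) = fun _ => (0:ℝ) := by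
          funext x
          exact (he 1).2 rfl
        rw [this]
        exact Finset.sup'_const _ _
    case isFalse hw =>
      constructor
      · intro h; norm_num at h
      · intro h; subst h; exact absurd rfl hw
  · intro w
    by_cases hw : w.right = 1
    · have hw' : w⁻¹.right = 1 := by rw [SemidirectProduct.inv_right, hw, inv_one]
      simp only [wrLen, hw, hw', if_pos rfl]
      have hfun : (fun x : X => ℓJ (w⁻¹.left x)) = fun x => ℓJ (w.left x) := by
        funext x
        have : w⁻¹.left x = (w.left x)⁻¹ := by
          rw [SemidirectProduct.inv_left, hw, inv_one, map_one]
          rfl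
        rw [this, hi]
      rw [hfun]
    · have hw' : ¬ w⁻¹.right = 1 := by
        rw [SemidirectProduct.inv_right]; simpa using hw
      simp only [wrLen, if_neg hw, if_neg hw']
  · intro w v
    by_cases hw : w.right = 1 <;> by_cases hv : v.right = 1
    · have hwv : (w * v).right = 1 := by
        rw [SemidirectProduct.mul_right, hw, hv, one_mul]
      simp only [wrLen, hw, hv, hwv, if_pos rfl]
      refine Finset.sup'_le ⟨1, Finset.mem_univ 1⟩ _ fun x _ => ?_
      have h1x : (w * v).left x = w.left x * v.left x := by
        rw [SemidirectProduct.mul_left, hw, map_one]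
        rfl
      rw [h1x]
      calc ℓJ (w.left x * v.left x) ≤ ℓJ (w.left x) + ℓJ (v.left x) := hs _ _
        _ ≤ _ := add_le_add
              (Finset.le_sup' (fun x => ℓJ (w.left x)) (Finset.mem_univ x))
              (Finset.le_sup' (fun x => ℓJ (v.left x)) (Finset.mem_univ x))
    · have : wrLen ℓJ v = 1 := by simp only [wrLen, if_neg hv]
      have := nonneg w
      have := le1 (w * v)
      linarith
    · have : wrLen ℓJ w = 1 := by simp only [wrLen, if_neg hw]
      have := nonneg v
      have := le1 (w * v)
      linarith
    · have : wrLen ℓJ w = 1 := by simp only [wrLen, if_neg hw]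
      have := nonneg v
      have := le1 (w * v)
      linarith
  · intro x y
    by_cases hy : y.right = 1
    · have hconj : (x * y * x⁻¹).right = 1 := by
        simp [SemidirectProduct.mul_right, SemidirectProduct.inv_right, hy]
      simp only [wrLen, if_pos hy, if_pos hconj]
      have hleft : ∀ z, (x * y * x⁻¹).left z
          = x.left z * y.left (z * x.right) * (x.left z)⁻¹ := by
        intro z
        simp [SemidirectProduct.mul_left, SemidirectProduct.mul_right,
          SemidirectProduct.inv_left, SemidirectProduct.inv_right, wrAct_apply,
          hy, Pi.mul_apply, Pi.inv_apply, mul_assoc]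
      have : (fun z : X => ℓJ ((x * y * x⁻¹).left z))
          = fun z : X => ℓJ (y.left (z * x.right)) := by
        funext z
        rw [hleft z, hc]
      rw [this, key (fun z => ℓJ (y.left z)) x.right]
    · have hconj : ¬ (x * y * x⁻¹).right = 1 := by
        simp only [SemidirectProduct.mul_right, SemidirectProduct.inv_right]
        intro h
        rw [mul_inv_eq_one] at h
        exact hy (mul_left_cancel (h.trans (mul_one x.right).symm))
      simp only [wrLen, if_neg hy, if_neg hconj]
end

section
/- If ℓ_J is a commutator-contractive invariant length function on a group J and X is a finite group, then the length function ℓ_J^X on the wreath product J ≀ X (defined by ℓ_J^X(b) = max_{x∈X} ℓ_J(b(x)) on the base group and ℓ_J^X(xb) = 1 for x ≠ 1) is commutator-contractive. -/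
/-- A length function is commutator-contractive if `ℓ([x,y]) ≤ 4 ℓ(x) ℓ(y)`. -/
def IsCommContractive {K : Type*} [Group K] (ℓ : K → ℝ) : Prop :=
  ∀ x y : K, ℓ (x⁻¹ * y⁻¹ * x * y) ≤ 4 * ℓ x * ℓ y

theorem stmt_7 {J X : Type*} [Group J] [Group X] [Fintype X] [DecidableEq X]
    (ℓJ : J → ℝ) (hJ : IsInvLength ℓJ) (hJc : IsCommContractive ℓJ) :
    IsCommContractive (wrLen (X := X) ℓJ) := by
  obtain ⟨h0, h1, -, hinv, hsub, hconj⟩ := hJ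
  intro u v
  have hconj' : ∀ x y : J, ℓJ (x⁻¹ * (y * x)) = ℓJ y := by
    intro x y
    have := hconj x⁻¹ y
    simpa [mul_assoc] using this
  have hentry : ∀ z, (u⁻¹ * v⁻¹ * u * v).left z =
      (u.left (z * u.right⁻¹))⁻¹ *
        ((v.left (z * (u.right⁻¹ * v.right⁻¹)))⁻¹ *
          (u.left (z * (u.right⁻¹ * v.right⁻¹)) *
            v.left (z * (u.right⁻¹ * (v.right⁻¹ * u.right))))) := by
    intro z
    simp [SemidirectProduct.mul_left, SemidirectProduct.inv_left, wrAct, mul_assoc]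
  have hright : (u⁻¹ * v⁻¹ * u * v).right =
      u.right⁻¹ * v.right⁻¹ * u.right * v.right := by simp
  have hne : Finset.univ.Nonempty := ⟨(1 : X), Finset.mem_univ 1⟩
  have hsupnn : ∀ w : Wr J X, (0:ℝ) ≤ wrLen ℓJ w := by
    intro w
    unfold wrLen
    split
    · exact le_trans (h0 (w.left 1))
        (Finset.le_sup' (fun x => ℓJ (w.left x)) (Finset.mem_univ 1))
    · norm_num
  have hsuple : ∀ w : Wr J X, wrLen ℓJ w ≤ 1 := by
    intro w
    unfold wrLen
    split
    · exact Finset.sup'_le _ _ fun z _ => h1 _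
    · norm_num
  by_cases hu : u.right = 1 <;> by_cases hv : v.right = 1
  · -- both in base
    have hur : (u⁻¹ * v⁻¹ * u * v).right = 1 := by rw [hright, hu, hv]; group
    unfold wrLen
    rw [if_pos hur, if_pos hu, if_pos hv]
    apply Finset.sup'_le
    intro z _
    rw [hentry z, hu, hv]
    simp only [inv_one, mul_one, one_mul]
    calc ℓJ ((u.left z)⁻¹ * ((v.left z)⁻¹ * (u.left z * v.left z)))
        = ℓJ ((u.left z)⁻¹ * (v.left z)⁻¹ * u.left z * v.left z) := by
          rw [mul_assoc, mul_assoc]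
      _ ≤ 4 * ℓJ (u.left z) * ℓJ (v.left z) := hJc _ _
      _ ≤ 4 * Finset.univ.sup' hne (fun z => ℓJ (u.left z)) *
            Finset.univ.sup' hne (fun z => ℓJ (v.left z)) := by
          have hA := Finset.le_sup' (fun z => ℓJ (u.left z)) (Finset.mem_univ z)
          have hB := Finset.le_sup' (fun z => ℓJ (v.left z)) (Finset.mem_univ z)
          have hsU : (0:ℝ) ≤ Finset.univ.sup' hne (fun z => ℓJ (u.left z)) :=
            le_trans (h0 _) (Finset.le_sup' (fun z => ℓJ (u.left z)) (Finset.mem_univ 1))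
          exact mul_le_mul (mul_le_mul_of_nonneg_left hA (by norm_num)) hB (h0 _)
            (mul_nonneg (by norm_num) hsU)
  · -- u base, v not
    have hur : (u⁻¹ * v⁻¹ * u * v).right = 1 := by rw [hright, hu]; group
    unfold wrLen
    rw [if_pos hur, if_pos hu, if_neg hv, mul_one]
    apply Finset.sup'_le
    intro z _
    rw [hentry z, hu]
    simp only [inv_one, one_mul, mul_one]
    set w := z * v.right⁻¹
    calc ℓJ ((u.left z)⁻¹ * ((v.left w)⁻¹ * (u.left w * v.left w)))
        ≤ ℓJ (u.left z)⁻¹ + ℓJ ((v.left w)⁻¹ * (u.left w * v.left w)) := hsub _ _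
      _ = ℓJ (u.left z) + ℓJ (u.left w) := by rw [hinv, hconj' (v.left w) (u.left w)]
      _ ≤ Finset.univ.sup' hne (fun z => ℓJ (u.left z)) +
          Finset.univ.sup' hne (fun z => ℓJ (u.left z)) := by
          gcongr <;> exact Finset.le_sup' (fun z => ℓJ (u.left z)) (Finset.mem_univ _)
      _ ≤ 4 * Finset.univ.sup' hne (fun z => ℓJ (u.left z)) := by
          have : (0:ℝ) ≤ Finset.univ.sup' hne (fun z => ℓJ (u.left z)) :=
            le_trans (h0 _) (Finset.le_sup' (fun z => ℓJ (u.left z)) (Finset.mem_univ (1:X)))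
          linarith
  · -- v base, u not
    have hur : (u⁻¹ * v⁻¹ * u * v).right = 1 := by rw [hright, hv]; group
    unfold wrLen
    rw [if_pos hur, if_neg hu, if_pos hv]
    rw [show (4:ℝ) * 1 = 4 by norm_num]
    apply Finset.sup'_le
    intro z _
    rw [hentry z, hv]
    simp only [inv_one, one_mul, mul_one]
    have harg : z * (u.right⁻¹ * u.right) = z := by group
    rw [harg]
    set w := z * u.right⁻¹
    calc ℓJ ((u.left w)⁻¹ * ((v.left w)⁻¹ * (u.left w * v.left z)))
        = ℓJ ((u.left w)⁻¹ * ((v.left w)⁻¹ * u.left w) * v.left z) := by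
          rw [mul_assoc, mul_assoc]
      _ ≤ ℓJ ((u.left w)⁻¹ * ((v.left w)⁻¹ * u.left w)) + ℓJ (v.left z) := hsub _ _
      _ = ℓJ (v.left w)⁻¹ + ℓJ (v.left z) := by rw [hconj' (u.left w) (v.left w)⁻¹]
      _ = ℓJ (v.left w) + ℓJ (v.left z) := by rw [hinv]
      _ ≤ Finset.univ.sup' hne (fun z => ℓJ (v.left z)) +
          Finset.univ.sup' hne (fun z => ℓJ (v.left z)) := by
          gcongr <;> exact Finset.le_sup' (fun z => ℓJ (v.left z)) (Finset.mem_univ _)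
      _ ≤ 4 * Finset.univ.sup' hne (fun z => ℓJ (v.left z)) := by
          have : (0:ℝ) ≤ Finset.univ.sup' hne (fun z => ℓJ (v.left z)) :=
            le_trans (h0 _) (Finset.le_sup' (fun z => ℓJ (v.left z)) (Finset.mem_univ (1:X)))
          linarith
  · -- neither in base
    have hwu : wrLen ℓJ u = 1 := by unfold wrLen; rw [if_neg hu]
    have hwv : wrLen ℓJ v = 1 := by unfold wrLen; rw [if_neg hv]
    rw [hwu, hwv]
    calc wrLen ℓJ (u⁻¹ * v⁻¹ * u * v) ≤ 1 := hsuple _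
      _ ≤ 4 * 1 * 1 := by norm_num
end

section
/- Let K be a group with invariant length function ℓ_K and A a nonempty finite set. On the permutation wreath product W = Sym(A) ⋉ B, where B is the group of functions A → K, the function ℓ̂_K^A((α,b)) = (1/|A|)(Σ_{a: α(a)=a} ℓ_K(b(a)) + Σ_{a: α(a)≠a} 1) is an invariant length function on W. -/
/-- The action of `Sym(A)` on the base group `A → K` of the permutation wreath
product, given by `(α • b) a = b (α⁻¹ a)`. -/
def permWrAct (K A : Type*) [Group K] : Equiv.Perm A →* MulAut (A → K) where
  toFun α :=
    { toFun := fun b a => b (α⁻¹ a)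
      invFun := fun b a => b (α a)
      left_inv := fun b => by funext a; simp
      right_inv := fun b => by funext a; simp
      map_mul' := fun b c => rfl }
  map_one' := by ext b a; simp
  map_mul' := fun α₁ α₂ => by ext b a; simp

/-- The permutation wreath product `K ≀ Sym(A) = Sym(A) ⋉ (A → K)`. -/
abbrev PermWr (K A : Type*) [Group K] := (A → K) ⋊[permWrAct K A] Equiv.Perm A

/-- The length function `ℓ̂_K^A` on the permutation wreath product. -/
noncomputable def permWrLen {K A : Type*} [Group K] [Fintype A] [DecidableEq A]
    (ℓK : K → ℝ) (w : PermWr K A) : ℝ :=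
  (1 / (Fintype.card A : ℝ)) *
    ∑ a : A, if w.right a = a then ℓK (w.left a) else 1

theorem stmt_8 {K A : Type*} [Group K] [Fintype A] [DecidableEq A] [Nonempty A]
    (ℓK : K → ℝ) (hK : IsInvLength ℓK) :
    IsInvLength (permWrLen (A := A) ℓK) := by
  obtain ⟨h0, h1, hzero, hinv, htri, hconj⟩ := hK
  have hcomm : ∀ x y : K, ℓK (x * y) = ℓK (y * x) := by
    intro x y
    have h := hconj y (x * y)
    have e : y * (x * y) * y⁻¹ = y * x := by group
    rw [e] at h
    exact h.symm
  set N : ℝ := (Fintype.card A : ℝ) with hNdef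
  have hN : (0 : ℝ) < N := by rw [hNdef]; exact_mod_cast Fintype.card_pos
  set T : PermWr K A → A → ℝ :=
    fun w a => if w.right a = a then ℓK (w.left a) else 1 with hT
  have hlen : ∀ w, permWrLen (A := A) ℓK w = (1 / N) * ∑ a : A, T w a := fun w => rfl
  have Tnn : ∀ w a, 0 ≤ T w a := by
    intro w a; simp only [hT]; split
    · exact h0 _
    · norm_num
  have Tle : ∀ w a, T w a ≤ 1 := by
    intro w a; simp only [hT]; split
    · exact h1 _
    · norm_num
  have Snn : ∀ w, 0 ≤ ∑ a : A, T w a := fun w => Finset.sum_nonneg fun a _ => Tnn w a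
  -- left/right of products
  have mul_right' : ∀ x y : PermWr K A, (x * y).right = x.right * y.right := fun _ _ => rfl
  have mul_left' : ∀ (x y : PermWr K A) (a : A),
      (x * y).left a = x.left a * y.left (x.right⁻¹ a) := fun _ _ _ => rfl
  have inv_right' : ∀ x : PermWr K A, (x⁻¹).right = x.right⁻¹ := fun _ => rfl
  have inv_left' : ∀ (x : PermWr K A) (a : A),
      (x⁻¹).left a = (x.left (x.right a))⁻¹ := fun _ _ => rfl
  refine ⟨?_, ?_, ?_, ?_, ?_, ?_⟩
  · -- nonneg
    intro w
    rw [hlen]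
    exact mul_nonneg (by positivity) (Snn w)
  · -- ≤ 1
    intro w
    rw [hlen]
    have : ∑ a : A, T w a ≤ N := by
      calc ∑ a : A, T w a ≤ ∑ _a : A, (1 : ℝ) :=
            Finset.sum_le_sum fun a _ => Tle w a
        _ = N := by simp [hNdef]
    calc (1 / N) * ∑ a : A, T w a ≤ (1 / N) * N :=
          mul_le_mul_of_nonneg_left this (by positivity)
      _ = 1 := by field_simp
  · -- zero iff
    intro w
    rw [hlen]
    constructor
    · intro h
      have hS : ∑ a : A, T w a = 0 := by
        rcases mul_eq_zero.mp h with h' | h'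
        · exact absurd h' (by positivity)
        · exact h'
      have hall : ∀ a ∈ Finset.univ, T w a = 0 :=
        (Finset.sum_eq_zero_iff_of_nonneg fun a _ => Tnn w a).mp hS
      have hfix : ∀ a : A, w.right a = a ∧ w.left a = 1 := by
        intro a
        have := hall a (Finset.mem_univ a)
        simp only [hT] at this
        by_cases hra : w.right a = a
        · rw [if_pos hra] at this
          exact ⟨hra, (hzero _).mp this⟩
        · rw [if_neg hra] at this; norm_num at this
      have hr : w.right = 1 := Equiv.ext fun a => (hfix a).1
      have hl : w.left = 1 := funext fun a => (hfix a).2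
      exact SemidirectProduct.ext hl hr
    · intro h
      subst h
      have : ∀ a : A, T 1 a = 0 := by
        intro a
        simp only [hT]
        have hr : (1 : PermWr K A).right = 1 := rfl
        have hl : (1 : PermWr K A).left = 1 := rfl
        rw [hr, hl]
        simp [(hzero 1).mpr rfl]
      simp [Finset.sum_eq_zero fun a _ => this a]
  · -- symmetric
    intro w
    rw [hlen, hlen]
    congr 1
    apply Finset.sum_congr rfl
    intro a _
    simp only [hT, inv_right' w, inv_left' w]
    by_cases hra : w.right a = a
    · have h1a : w.right⁻¹ a = a := by
        rw [Equiv.Perm.inv_eq_iff_eq]; exact hra.symm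
      rw [if_pos h1a, if_pos hra, hra, hinv]
    · have h1a : ¬ w.right⁻¹ a = a := by
        rw [Equiv.Perm.inv_eq_iff_eq]; exact fun h => hra h.symm
      rw [if_neg h1a, if_neg hra]
  · -- subadditive
    intro x y
    rw [hlen, hlen, hlen, ← mul_add]
    apply mul_le_mul_of_nonneg_left _ (by positivity)
    have hre : ∑ a : A, T y a = ∑ a : A, T y (x.right⁻¹ a) :=
      (Equiv.sum_comp (x.right⁻¹ : Equiv.Perm A) (T y)).symm
    rw [hre, ← Finset.sum_add_distrib]
    apply Finset.sum_le_sum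
    intro a _
    by_cases hx : x.right a = a
    · have hxi : x.right⁻¹ a = a := by
        rw [Equiv.Perm.inv_eq_iff_eq]; exact hx.symm
      by_cases hy : y.right a = a
      · have hxy : (x * y).right a = a := by
          rw [mul_right']; simp [Equiv.Perm.mul_apply, hy, hx]
        simp only [hT, if_pos hxy, if_pos hx, hxi, if_pos hy, mul_left']
        exact htri _ _
      · have hyi : ¬ y.right (x.right⁻¹ a) = x.right⁻¹ a := by rw [hxi]; exact hy
        calc T (x * y) a ≤ 1 := Tle _ _
          _ ≤ T x a + T y (x.right⁻¹ a) := by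
              have : T y (x.right⁻¹ a) = 1 := by simp only [hT, if_neg hyi]
              rw [this]
              linarith [Tnn x a]
    · calc T (x * y) a ≤ 1 := Tle _ _
        _ ≤ T x a + T y (x.right⁻¹ a) := by
            have : T x a = 1 := by simp only [hT, if_neg hx]
            rw [this]
            linarith [Tnn y (x.right⁻¹ a)]
  · -- conjugation invariance
    have key : ∀ x y : PermWr K A,
        permWrLen (A := A) ℓK (x * y) = permWrLen (A := A) ℓK (y * x) := by
      intro x y
      rw [hlen, hlen]
      congr 1
      have hre : ∑ a : A, T (y * x) a = ∑ a : A, T (y * x) (x.right⁻¹ a) :=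
        (Equiv.sum_comp (x.right⁻¹ : Equiv.Perm A) (T (y * x))).symm
      rw [hre]
      apply Finset.sum_congr rfl
      intro a _
      simp only [hT, mul_right', mul_left', Equiv.Perm.mul_apply]
      by_cases hxy : x.right (y.right a) = a
      · have hya : y.right a = x.right⁻¹ a := by
          have := congrArg (⇑x.right⁻¹) hxy; simpa using this
        have hc2 : y.right (x.right (x.right⁻¹ a)) = x.right⁻¹ a := by
          simp only [Equiv.Perm.coe_inv, Equiv.apply_symm_apply]; exact hya
        rw [if_pos hxy, if_pos hc2]
        have harg : y.right⁻¹ (x.right⁻¹ a) = a := by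
          rw [← hya]; simp
        rw [harg]
        exact hcomm _ _
      · have hc2 : ¬ y.right (x.right (x.right⁻¹ a)) = x.right⁻¹ a := by
          simp only [Equiv.Perm.coe_inv, Equiv.apply_symm_apply]
          intro h
          apply hxy
          have := congrArg (⇑x.right) h; simpa using this
        rw [if_neg hxy, if_neg hc2]
    intro x y
    have := key x (y * x⁻¹)
    calc permWrLen (A := A) ℓK (x * y * x⁻¹)
        = permWrLen (A := A) ℓK (x * (y * x⁻¹)) := by rw [mul_assoc]
      _ = permWrLen (A := A) ℓK (y * x⁻¹ * x) := this
      _ = permWrLen (A := A) ℓK y := by rw [inv_mul_cancel_right]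
end

section
/- Let g₁, g₂ be n×n unitary matrices and let ℓ(g) = (1/2)·(Tr((g−I)*(g−I))/n)^{1/2} denote half the normalized Hilbert–Schmidt distance from the identity. If ℓ(g₁) > 1−ε and ℓ(g₂) > 1−ε for some ε with 0 < ε < 1, then ℓ(g₁g₂) < 2√(2ε). -/
open Matrix

attribute [local instance] Matrix.frobeniusSeminormedAddCommGroup

/-- The normalized Hilbert–Schmidt norm of an `n × n` complex matrix. -/
noncomputable def hsNorm (n : ℕ) (A : Matrix (Fin n) (Fin n) ℂ) : ℝ :=
  Real.sqrt ((Aᴴ * A).trace.re / n)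

/-- The length function `ℓ(g) = (1/2) ‖g - I‖_HS` on the unitary group. -/
noncomputable def hsLen (n : ℕ) (g : Matrix (Fin n) (Fin n) ℂ) : ℝ :=
  (1 / 2) * hsNorm n (g - 1)

lemma traceQ {n : ℕ} (A : Matrix (Fin n) (Fin n) ℂ) :
    (Aᴴ * A).trace.re = ∑ i, ∑ j, ‖A i j‖ ^ 2 := by
  simp only [Matrix.trace, Matrix.diag, Matrix.mul_apply, Matrix.conjTranspose_apply]
  rw [Complex.re_sum, Finset.sum_comm]
  refine Finset.sum_congr rfl fun i _ => ?_
  rw [Complex.re_sum]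
  refine Finset.sum_congr rfl fun j _ => ?_
  rw [Complex.star_def, ← Complex.normSq_eq_conj_mul_self, Complex.normSq_eq_norm_sq]
  norm_cast

lemma hsNorm_eq {n : ℕ} (A : Matrix (Fin n) (Fin n) ℂ) :
    hsNorm n A = ‖A‖ / Real.sqrt n := by
  rw [hsNorm, Matrix.frobenius_norm_def, traceQ, Real.sqrt_div (by positivity)]
  congr 1
  rw [Real.sqrt_eq_rpow]
  congr 1
  refine Finset.sum_congr rfl fun i _ => Finset.sum_congr rfl fun j _ => ?_
  rw [← Real.rpow_natCast ‖A i j‖ 2]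
  norm_num

lemma hsNorm_nonneg {n : ℕ} (A : Matrix (Fin n) (Fin n) ℂ) : 0 ≤ hsNorm n A :=
  Real.sqrt_nonneg _

lemma hsNorm_sub_le {n : ℕ} (A B : Matrix (Fin n) (Fin n) ℂ) :
    hsNorm n (A - B) ≤ hsNorm n A + hsNorm n B := by
  simp only [hsNorm_eq, ← add_div]
  gcongr
  exact norm_sub_le A B

lemma hsNorm_mul_unitary {n : ℕ} (A g : Matrix (Fin n) (Fin n) ℂ) (hg : gᴴ * g = 1) :
    hsNorm n (A * g) = hsNorm n A := by
  have h1 : g * gᴴ = 1 := mul_eq_one_comm.mp hg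
  have hM : (A * g)ᴴ * (A * g) = gᴴ * (Aᴴ * A) * g := by
    rw [conjTranspose_mul]; noncomm_ring
  have ht : ((A * g)ᴴ * (A * g)).trace = (Aᴴ * A).trace := by
    rw [hM, Matrix.trace_mul_comm (gᴴ * (Aᴴ * A)) g, ← Matrix.mul_assoc, h1, Matrix.one_mul]
  rw [hsNorm, hsNorm, ht]

lemma hsNorm_sq {n : ℕ} (hn : 0 < n) (A : Matrix (Fin n) (Fin n) ℂ) :
    hsNorm n A ^ 2 = (Aᴴ * A).trace.re / n := by
  rw [hsNorm, Real.sq_sqrt]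
  have : (0:ℝ) ≤ (Aᴴ * A).trace.re := by rw [traceQ]; positivity
  positivity

lemma unitary_parallelogram {n : ℕ} (hn : 0 < n) (g : Matrix (Fin n) (Fin n) ℂ)
    (hg : gᴴ * g = 1) : hsNorm n (g - 1) ^ 2 + hsNorm n (g + 1) ^ 2 = 4 := by
  rw [hsNorm_sq hn, hsNorm_sq hn, ← add_div]
  have hM : (g - 1)ᴴ * (g - 1) + (g + 1)ᴴ * (g + 1) = (2:ℂ) • (gᴴ * g) + (2:ℂ) • 1 := by
    rw [show ((2:ℂ) • (gᴴ * g) + (2:ℂ) • (1 : Matrix (Fin n) (Fin n) ℂ))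
        = gᴴ * g + gᴴ * g + 1 + 1 from by rw [two_smul, two_smul]; abel]
    simp only [conjTranspose_sub, conjTranspose_add, conjTranspose_one]
    noncomm_ring
  have ht : ((g - 1)ᴴ * (g - 1)).trace + ((g + 1)ᴴ * (g + 1)).trace = (4 : ℂ) * n := by
    rw [← Matrix.trace_add, hM, hg]
    simp [Matrix.trace_smul, Matrix.trace_one, smul_eq_mul]
    ring
  have hre : ((g - 1)ᴴ * (g - 1)).trace.re + ((g + 1)ᴴ * (g + 1)).trace.re = (4 : ℝ) * n := by
    rw [← Complex.add_re, ht]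
    simp
  rw [hre]
  field_simp

lemma small_plus {n : ℕ} (hn : 0 < n) (g : Matrix (Fin n) (Fin n) ℂ) (hg : gᴴ * g = 1)
    (ε : ℝ) (hε0 : 0 < ε) (hε1 : ε < 1) (hlen : 1 - ε < hsLen n g) :
    hsNorm n (g + 1) < Real.sqrt (8 * ε) := by
  have hpar := unitary_parallelogram hn g hg
  have ha : 2 * (1 - ε) < hsNorm n (g - 1) := by
    rw [hsLen] at hlen; linarith
  have hb : hsNorm n (g + 1) ^ 2 < 8 * ε := by
    nlinarith [hsNorm_nonneg (g - 1), hε0.le, hε1.le, sq_nonneg ε]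
  have := Real.lt_sqrt (hsNorm_nonneg (g + 1)) (y := 8 * ε)
  exact this.mpr hb

theorem stmt_10 {n : ℕ} (hn : 0 < n) (g₁ g₂ : Matrix (Fin n) (Fin n) ℂ)
    (hg₁ : g₁ᴴ * g₁ = 1) (hg₂ : g₂ᴴ * g₂ = 1)
    (ε : ℝ) (hε0 : 0 < ε) (hε1 : ε < 1)
    (h₁ : 1 - ε < hsLen n g₁) (h₂ : 1 - ε < hsLen n g₂) :
    hsLen n (g₁ * g₂) < 2 * Real.sqrt (2 * ε) := by
  have e1 := small_plus hn g₁ hg₁ ε hε0 hε1 h₁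
  have e2 := small_plus hn g₂ hg₂ ε hε0 hε1 h₂
  have key : g₁ * g₂ - 1 = (g₁ + 1) * g₂ - (g₂ + 1) := by noncomm_ring
  have htri : hsNorm n (g₁ * g₂ - 1) ≤ hsNorm n (g₁ + 1) + hsNorm n (g₂ + 1) := by
    rw [key]
    calc hsNorm n ((g₁ + 1) * g₂ - (g₂ + 1))
        ≤ hsNorm n ((g₁ + 1) * g₂) + hsNorm n (g₂ + 1) := hsNorm_sub_le _ _
      _ = hsNorm n (g₁ + 1) + hsNorm n (g₂ + 1) := by
          rw [hsNorm_mul_unitary _ _ hg₂]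
  have hsq : Real.sqrt (8 * ε) = 2 * Real.sqrt (2 * ε) := by
    rw [show (8:ℝ) * ε = 4 * (2 * ε) by ring, Real.sqrt_mul (by norm_num),
      show (4:ℝ) = 2 ^ 2 by norm_num, Real.sqrt_sq (by norm_num)]
  rw [hsLen]
  calc (1/2 : ℝ) * hsNorm n (g₁ * g₂ - 1)
      ≤ (1/2) * (hsNorm n (g₁ + 1) + hsNorm n (g₂ + 1)) := by linarith
    _ < (1/2) * (Real.sqrt (8 * ε) + Real.sqrt (8 * ε)) := by linarith
    _ = 2 * Real.sqrt (2 * ε) := by rw [hsq]; ring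
end

section
/- Let C be a class of groups with invariant length functions such that for some fixed p ≥ 1, whenever (J,ℓ_J), (K,ℓ_K) ∈ C, also (J × K, L^p) ∈ C, where L^p(x,y) = ((ℓ_J(x)^p + ℓ_K(y)^p)/2)^{1/p}. Then the direct product of two C-approximable groups is C-approximable. -/
/-- A weight function on a group `G`. -/
def IsWeight {G : Type*} [Group G] (δ : G → ℝ) : Prop :=
  δ 1 = 0 ∧ ∀ g : G, g ≠ 1 → 0 < δ g ∧ δ g ≤ 1

/-- `φ : G → K` is an `(F, ε, δ, ℓK)`-quasi-homomorphism. -/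
def QuasiHom {G K : Type*} [Group G] [Group K] (F : Finset G) (ε : ℝ)
    (δ : G → ℝ) (ℓK : K → ℝ) (φ : G → K) : Prop :=
  φ 1 = 1 ∧
  (∀ g ∈ F, ∀ h ∈ F, ℓK (φ (g * h) * (φ h)⁻¹ * (φ g)⁻¹) ≤ ε) ∧
  (∀ g ∈ F, g ≠ 1 → δ g ≤ ℓK (φ g))

/-- A group `G` is approximable by the class `𝒞 = {(K i, ℓ i)}`. -/
def CApprox {ι : Type*} (K : ι → Type*) [∀ i, Group (K i)]
    (ℓ : ∀ i, K i → ℝ) (G : Type*) [Group G] : Prop :=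
  ∃ δ : G → ℝ, IsWeight δ ∧
    ∀ ε : ℝ, 0 < ε → ∀ F : Finset G,
      ∃ i : ι, ∃ φ : G → K i, QuasiHom F ε δ (ℓ i) φ

lemma Lp_mono (p : ℕ) {a b a' b' : ℝ} (ha : 0 ≤ a) (hb : 0 ≤ b)
    (haa : a ≤ a') (hbb : b ≤ b') :
    ((a^p + b^p)/2) ^ ((p:ℝ)⁻¹) ≤ ((a'^p + b'^p)/2) ^ ((p:ℝ)⁻¹) := by
  gcongr

lemma Lp_diag (p : ℕ) (hp : p ≠ 0) {ε : ℝ} (hε : 0 ≤ ε) :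
    ((ε^p + ε^p)/2) ^ ((p:ℝ)⁻¹) = ε := by
  have h : (ε^p + ε^p)/2 = ε^p := by ring
  rw [h, ← Real.rpow_natCast ε p, ← Real.rpow_mul hε,
    mul_inv_cancel₀ (by exact_mod_cast hp), Real.rpow_one]

theorem stmt_15 {ι : Type*} (K : ι → Type*) [∀ i, Group (K i)]
    (ℓ : ∀ i, K i → ℝ) (hℓ : ∀ i, IsInvLength (ℓ i))
    (p : ℕ) (hp : 1 ≤ p)
    (hclosed : ∀ i j : ι, ∃ k : ι, ∃ e : K i × K j ≃* K k,
      ∀ z : K i × K j,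
        ℓ k (e z) = ((ℓ i z.1 ^ p + ℓ j z.2 ^ p) / 2) ^ ((p : ℝ)⁻¹))
    (G H : Type*) [Group G] [Group H]
    (hG : CApprox K ℓ G) (hH : CApprox K ℓ H) :
    CApprox K ℓ (G × H) := by
  classical
  have hp0 : p ≠ 0 := by omega
  have hpinv : ((p:ℝ)⁻¹) ≠ 0 := by simp [hp0]
  obtain ⟨δG, ⟨hδG1, hδGw⟩, hGapp⟩ := hG
  obtain ⟨δH, ⟨hδH1, hδHw⟩, hHapp⟩ := hH
  have hδGnn : ∀ g : G, 0 ≤ δG g := by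
    intro g; by_cases h : g = 1
    · simp [h, hδG1]
    · exact (hδGw g h).1.le
  have hδHnn : ∀ h : H, 0 ≤ δH h := by
    intro g; by_cases h : g = 1
    · simp [h, hδH1]
    · exact (hδHw g h).1.le
  refine ⟨fun x => ((δG x.1 ^ p + δH x.2 ^ p) / 2) ^ ((p:ℝ)⁻¹), ⟨?_, ?_⟩, ?_⟩
  · simp [hδG1, hδH1, zero_pow hp0, Real.zero_rpow hpinv]
  · rintro ⟨g, h⟩ hgh
    constructor
    · have : g ≠ 1 ∨ h ≠ 1 := by
        by_contra hc
        push_neg at hc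
        exact hgh (Prod.ext hc.1 hc.2)
      have hpos : 0 < (δG g ^ p + δH h ^ p) / 2 := by
        rcases this with h1 | h1
        · have := (hδGw g h1).1
          have h2 := hδHnn h
          positivity
        · have := (hδHw h h1).1
          have h2 := hδGnn g
          positivity
      positivity
    · calc ((δG g ^ p + δH h ^ p) / 2) ^ ((p:ℝ)⁻¹)
          ≤ (((1:ℝ)^p + 1^p) / 2) ^ ((p:ℝ)⁻¹) := by
            apply Lp_mono p (hδGnn g) (hδHnn h)
            · by_cases h1 : g = 1
              · simp [h1, hδG1]
              · exact (hδGw g h1).2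
            · by_cases h1 : h = 1
              · simp [h1, hδH1]
              · exact (hδHw h h1).2
        _ = 1 := Lp_diag p hp0 zero_le_one
  · intro ε hε F
    obtain ⟨i, φ, hφ1, hφ2, hφ3⟩ := hGapp ε hε (F.image Prod.fst)
    obtain ⟨j, ψ, hψ1, hψ2, hψ3⟩ := hHapp ε hε (F.image Prod.snd)
    obtain ⟨k, e, he⟩ := hclosed i j
    refine ⟨k, fun x => e (φ x.1, ψ x.2), ?_, ?_, ?_⟩
    · simp [hφ1, hψ1]
    · intro x hx y hy
      have hx1 : x.1 ∈ F.image Prod.fst := Finset.mem_image_of_mem _ hx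
      have hy1 : y.1 ∈ F.image Prod.fst := Finset.mem_image_of_mem _ hy
      have hx2 : x.2 ∈ F.image Prod.snd := Finset.mem_image_of_mem _ hx
      have hy2 : y.2 ∈ F.image Prod.snd := Finset.mem_image_of_mem _ hy
      have key : e (φ (x*y).1, ψ (x*y).2) * (e (φ y.1, ψ y.2))⁻¹ *
          (e (φ x.1, ψ x.2))⁻¹ =
          e ((φ (x.1*y.1) * (φ y.1)⁻¹ * (φ x.1)⁻¹,
              ψ (x.2*y.2) * (ψ y.2)⁻¹ * (ψ x.2)⁻¹)) := by
        simp only [← map_inv, ← map_mul]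
        rfl
      rw [key, he]
      calc ((ℓ i (φ (x.1*y.1) * (φ y.1)⁻¹ * (φ x.1)⁻¹) ^ p +
              ℓ j (ψ (x.2*y.2) * (ψ y.2)⁻¹ * (ψ x.2)⁻¹) ^ p) / 2) ^ ((p:ℝ)⁻¹)
          ≤ ((ε^p + ε^p)/2) ^ ((p:ℝ)⁻¹) :=
            Lp_mono p ((hℓ i).1 _) ((hℓ j).1 _)
              (hφ2 _ hx1 _ hy1) (hψ2 _ hx2 _ hy2)
        _ = ε := Lp_diag p hp0 hε.le
    · intro x hx hx1
      rw [he]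
      apply Lp_mono p (hδGnn x.1) (hδHnn x.2)
      · by_cases h1 : x.1 = 1
        · simp only [h1, hδG1, hφ1]; exact (hℓ i).1 _
        · exact hφ3 _ (Finset.mem_image_of_mem _ hx) h1
      · by_cases h1 : x.2 = 1
        · simp only [h1, hδH1, hψ1]; exact (hℓ j).1 _
        · exact hψ3 _ (Finset.mem_image_of_mem _ hx) h1
end

section
/- Let σ ∈ Sym(Y) where Y = X^M is the set of functions from a finite set M (|M| = m ≥ 1) to a finite set X (|X| ≥ 2), and suppose there is a fixed-point-free permutation π of M such that every fixed point δ of σ satisfies: δ(k) is determined by δ(π(k)) for each k ∈ M (i.e., there are functions f_k : X → X with δ(k) = f_k(δ(π(k))) for every fixed point δ). Then the proportion of fixed points of σ in Y is at most |X|^{-m/2}. -/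
theorem stmt_18 {M X : Type*} [Fintype M] [DecidableEq M] [Fintype X] [DecidableEq X]
    (hm : 1 ≤ Fintype.card M) (hX : 2 ≤ Fintype.card X)
    (σ : Equiv.Perm (M → X)) (π : Equiv.Perm M) (hπ : ∀ k : M, π k ≠ k)
    (f : M → X → X)
    (hfix : ∀ δ : M → X, σ δ = δ → ∀ k : M, δ k = f k (δ (π k))) :
    ((Finset.univ.filter fun δ : M → X => σ δ = δ).card : ℝ) /
        (Fintype.card X : ℝ) ^ (Fintype.card M) ≤
      (Fintype.card X : ℝ) ^ (-(Fintype.card M : ℝ) / 2) := by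
  classical
  set m := Fintype.card M with hmdef
  -- quotient by the same-cycle relation of π
  let s : Setoid M := ⟨π.SameCycle,
    ⟨fun x => Equiv.Perm.SameCycle.refl π x, fun h => h.symm, fun h h' => h.trans h'⟩⟩
  let Q := Quotient s
  -- propagation: agreement at π^i x propagates to x
  have key : ∀ (δ δ' : M → X), σ δ = δ → σ δ' = δ' →
      ∀ (i : ℕ) (x : M), δ ((π ^ i) x) = δ' ((π ^ i) x) → δ x = δ' x := by
    intro δ δ' hδ hδ' i
    induction i with
    | zero => intro x hx; simpa using hx
    | succ n ih =>
      intro x hx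
      have hx' : δ ((π ^ n) (π x)) = δ' ((π ^ n) (π x)) := by
        have : (π ^ (n + 1)) x = (π ^ n) (π x) := by
          rw [pow_succ]; rfl
        rwa [this] at hx
      have h2 : δ (π x) = δ' (π x) := ih (π x) hx'
      rw [hfix δ hδ x, hfix δ' hδ' x, h2]
  -- injection from fixed points into Q → X
  let F : {δ : M → X // σ δ = δ} → (Q → X) := fun δ q => δ.1 (Quotient.out q)
  have hinj : Function.Injective F := by
    intro δ δ' h
    apply Subtype.ext
    funext k
    have hq : π.SameCycle k (Quotient.out (Quotient.mk s k)) := by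
      have := Quotient.out_eq (Quotient.mk s k)
      exact (Quotient.exact this).symm
    obtain ⟨i, -, -, hi⟩ := Equiv.Perm.SameCycle.exists_pow_eq π hq
    have hval : δ.1 ((π ^ i) k) = δ'.1 ((π ^ i) k) := by
      rw [hi]
      exact congrFun h (Quotient.mk s k)
    exact key δ.1 δ'.1 δ.2 δ'.2 i k hval
  -- card of fixed points ≤ |X| ^ card Q
  have hcard1 : (Finset.univ.filter fun δ : M → X => σ δ = δ).card ≤
      Fintype.card X ^ Fintype.card Q := by
    have := Fintype.card_le_of_injective F hinj
    rwa [Fintype.card_subtype, Fintype.card_fun] at this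
  -- 2 * card Q ≤ m
  have hcard2 : 2 * Fintype.card Q ≤ m := by
    have hfib : Fintype.card M
        = ∑ q : Q, (Finset.univ.filter fun x : M => Quotient.mk s x = q).card := by
      rw [← Finset.card_univ]
      exact Finset.card_eq_sum_card_fiberwise (fun x _ => Finset.mem_univ _)
    have hge : ∀ q : Q, 2 ≤ (Finset.univ.filter fun x : M => Quotient.mk s x = q).card := by
      intro q
      have h1 : Quotient.mk s (Quotient.out q) = q := Quotient.out_eq q
      have h2 : Quotient.mk s (π (Quotient.out q)) = q := by
        have hs : Quotient.mk s (π (Quotient.out q)) = Quotient.mk s (Quotient.out q) :=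
          Quotient.sound (show π.SameCycle (π (Quotient.out q)) (Quotient.out q) from
            ⟨-1, by simp⟩)
        rw [hs, h1]
      have : 1 < (Finset.univ.filter fun x : M => Quotient.mk s x = q).card := by
        rw [Finset.one_lt_card]
        exact ⟨π (Quotient.out q), by simp [h2], Quotient.out q, by simp [h1],
          hπ (Quotient.out q)⟩
      omega
    calc 2 * Fintype.card Q = ∑ _q : Q, 2 := by
          rw [Finset.sum_const, Finset.card_univ]; ring
      _ ≤ ∑ q : Q, (Finset.univ.filter fun x : M => Quotient.mk s x = q).card :=
          Finset.sum_le_sum fun q _ => hge q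
      _ = m := hfib.symm
  -- real arithmetic
  have hXpos : (0:ℝ) < (Fintype.card X : ℝ) := by positivity
  have hX1 : (1:ℝ) ≤ (Fintype.card X : ℝ) := by exact_mod_cast Nat.one_le_of_lt hX
  rw [div_le_iff₀ (by positivity)]
  have hrw : ((Fintype.card X : ℝ) ^ (-(m : ℝ) / 2)) * (Fintype.card X : ℝ) ^ m
      = (Fintype.card X : ℝ) ^ ((m : ℝ) / 2) := by
    rw [← Real.rpow_natCast (Fintype.card X : ℝ) m, ← Real.rpow_add hXpos]
    ring_nf
  rw [hrw]
  calc ((Finset.univ.filter fun δ : M → X => σ δ = δ).card : ℝ)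
      ≤ (Fintype.card X : ℝ) ^ (Fintype.card Q) := by exact_mod_cast hcard1
    _ = (Fintype.card X : ℝ) ^ ((Fintype.card Q : ℝ)) :=
        (Real.rpow_natCast _ _).symm
    _ ≤ (Fintype.card X : ℝ) ^ ((m : ℝ) / 2) := by
        apply Real.rpow_le_rpow_of_exponent_le hX1
        have : (2 : ℝ) * (Fintype.card Q : ℝ) ≤ (m : ℝ) := by exact_mod_cast hcard2
        linarith
end
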